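/- Let E ⊂ ℝⁿ and suppose that for each x ∈ E there exist δ_x > 0, α_x > 0, and ν_x ∈ 𝕊^{n-1} such that (x + C_{α_x}(ν_x^⊥)) ∩ B_{δ_x}(x) ∩ E = ∅ (a one-sided cone condition). Then E is (n-1)-rectifiable, i.e., E can be covered by countably many Lipschitz graphs over (n-1)-dimensional hyperplanes, up to an H^{n-1}-null set. -/

import Mathlib

open scoped RealInnerProductSpace MeasureTheory

section cone_aux
variable {E : Type*} [NormedAddCommGroup E] [InnerProductSpace ℝ E]

lemma one_sided {j : ℝ} (hj : 1 ≤ j) {ν₀ νx : E} (h0 : ‖ν₀‖ = 1) (hx : ‖νx‖ = 1)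
    (hclose : ‖νx - ν₀‖ ≤ 1 / (12 * j)) {u : E}
    (hcone : ⟪u, νx⟫ ≤ j * ‖u - ⟪u, νx⟫ • νx‖) :
    ⟪u, ν₀⟫ ≤ 2 * j * ‖u - ⟪u, ν₀⟫ • ν₀‖ := by
  set s := ⟪u, ν₀⟫ with hs
  set sx := ⟪u, νx⟫ with hsx
  set p := ‖u - s • ν₀‖ with hp
  set px := ‖u - sx • νx‖ with hpx
  have hjpos : (0:ℝ) < j := by linarith
  have hppos : 0 ≤ p := norm_nonneg _
  have hε : (0:ℝ) < 1/(12*j) := by positivity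
  have h1 : |s - sx| ≤ ‖u‖ * (1/(12*j)) := by
    have he : s - sx = ⟪u, ν₀ - νx⟫ := by rw [hs, hsx, inner_sub_right]
    rw [he]
    calc |⟪u, ν₀ - νx⟫| ≤ ‖u‖ * ‖ν₀ - νx‖ := abs_real_inner_le_norm _ _
      _ ≤ ‖u‖ * (1/(12*j)) := by gcongr; rwa [norm_sub_rev]
  have hsxb : |sx| ≤ ‖u‖ := by
    calc |sx| ≤ ‖u‖ * ‖νx‖ := abs_real_inner_le_norm _ _
      _ = ‖u‖ := by rw [hx, mul_one]
  have e1 : ‖(s - sx) • ν₀‖ ≤ ‖u‖ * (1/(12*j)) := by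
    rw [norm_smul, h0, mul_one, Real.norm_eq_abs]; exact h1
  have e2 : ‖sx • (ν₀ - νx)‖ ≤ ‖u‖ * (1/(12*j)) := by
    rw [norm_smul, Real.norm_eq_abs, norm_sub_rev]
    exact mul_le_mul hsxb hclose (norm_nonneg _) (norm_nonneg _)
  have h2 : px ≤ p + 2 * (‖u‖ * (1/(12*j))) := by
    have key : u - sx • νx = (u - s • ν₀) + ((s - sx) • ν₀ + sx • (ν₀ - νx)) := by
      module
    calc px = ‖(u - s • ν₀) + ((s - sx) • ν₀ + sx • (ν₀ - νx))‖ := by rw [hpx, key]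
      _ ≤ ‖u - s • ν₀‖ + (‖(s - sx) • ν₀‖ + ‖sx • (ν₀ - νx)‖) :=
          (norm_add_le _ _).trans (by gcongr; exact norm_add_le _ _)
      _ ≤ p + 2 * (‖u‖ * (1/(12*j))) := by rw [← hp]; linarith
  have h3 : ‖u‖ ≤ p + |s| := by
    calc ‖u‖ = ‖(u - s • ν₀) + s • ν₀‖ := by rw [sub_add_cancel]
      _ ≤ p + ‖s • ν₀‖ := norm_add_le _ _
      _ = p + |s| := by rw [norm_smul, h0, mul_one, Real.norm_eq_abs]
  rcases le_or_gt s 0 with h | h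
  · nlinarith [mul_nonneg (by linarith : (0:ℝ) ≤ 2*j) hppos]
  · have habs : |s| = s := abs_of_pos h
    have hsle : s ≤ sx + ‖u‖ * (1/(12*j)) := by
      have := abs_le.1 h1
      linarith [this.2]
    have hj' : (2*j+1) * (1/(12*j)) ≤ 1/4 := by
      rw [mul_one_div, div_le_div_iff₀ (by positivity) (by norm_num)]
      nlinarith
    have hun : 0 ≤ ‖u‖ := norm_nonneg _
    have step : s ≤ j * p + (2*j+1) * (1/(12*j)) * ‖u‖ := by nlinarith
    have step2 : (2*j+1) * (1/(12*j)) * ‖u‖ ≤ (1/4) * (p + s) := by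
      have : ‖u‖ ≤ p + s := by rw [habs] at h3; exact h3
      nlinarith [hε.le]
    nlinarith

lemma two_sided {j : ℝ} (hj : 1 ≤ j) {ν₀ νx νy u : E} (h0 : ‖ν₀‖ = 1)
    (hx : ‖νx‖ = 1) (hy : ‖νy‖ = 1)
    (hcx : ‖νx - ν₀‖ ≤ 1 / (12 * j)) (hcy : ‖νy - ν₀‖ ≤ 1 / (12 * j))
    (hconex : ⟪u, νx⟫ ≤ j * ‖u - ⟪u, νx⟫ • νx‖)
    (hconey : ⟪-u, νy⟫ ≤ j * ‖(-u) - ⟪-u, νy⟫ • νy‖) :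
    |⟪u, ν₀⟫| ≤ 2 * j * ‖u - ⟪u, ν₀⟫ • ν₀‖ := by
  rw [abs_le]
  constructor
  · have := one_sided hj h0 hy hcy hconey
    rw [inner_neg_left] at this
    have hnorm : ‖(-u) - (-⟪u, ν₀⟫) • ν₀‖ = ‖u - ⟪u, ν₀⟫ • ν₀‖ := by
      rw [show (-u) - (-⟪u, ν₀⟫) • ν₀ = -(u - ⟪u, ν₀⟫ • ν₀) by module, norm_neg]
    rw [hnorm] at this
    linarith
  · exact one_sided hj h0 hx hcx hconex

end cone_aux

/-- A piece of the decomposition: points of `A` near `c`, admitting a cone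
direction `ε`-close to `ν₀`, with cone parameters quantified by `j`. -/
def piece {n : ℕ} (A : Set (EuclideanSpace ℝ (Fin n))) (ν₀ : EuclideanSpace ℝ (Fin n))
    (j : ℕ) (c : EuclideanSpace ℝ (Fin n)) : Set (EuclideanSpace ℝ (Fin n)) :=
  {x | x ∈ A ∧ x ∈ Metric.ball c (1 / (2 * (j : ℝ))) ∧
    ∃ w : EuclideanSpace ℝ (Fin n), ‖w‖ = 1 ∧ ‖w - ν₀‖ ≤ 1 / (12 * (j : ℝ)) ∧
      ∀ z ∈ Metric.ball x (1 / (j : ℝ)),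
        (j : ℝ) * ‖(z - x) - ⟪z - x, w⟫ • w‖ < ⟪z - x, w⟫ → z ∉ A}

lemma piece_key {n : ℕ} {A : Set (EuclideanSpace ℝ (Fin n))} {ν₀ : EuclideanSpace ℝ (Fin n)}
    (hν₀ : ‖ν₀‖ = 1) {j : ℕ} (hj : 1 ≤ j) {c x y : EuclideanSpace ℝ (Fin n)}
    (hx : x ∈ piece A ν₀ j c) (hy : y ∈ piece A ν₀ j c) :
    |⟪y - x, ν₀⟫| ≤ 2 * (j : ℝ) * ‖(y - x) - ⟪y - x, ν₀⟫ • ν₀‖ := by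
  obtain ⟨hxA, hxb, wx, hwx1, hwx2, hwx3⟩ := hx
  obtain ⟨hyA, hyb, wy, hwy1, hwy2, hwy3⟩ := hy
  have hjR : (1:ℝ) ≤ (j:ℝ) := by exact_mod_cast hj
  have hJpos : (0:ℝ) < (j:ℝ) := by linarith
  have hdist : dist y x < 1 / (j : ℝ) := by
    calc dist y x ≤ dist y c + dist c x := dist_triangle _ _ _
      _ < 1/(2*(j:ℝ)) + 1/(2*(j:ℝ)) := by
          rw [dist_comm c x]
          exact add_lt_add (Metric.mem_ball.1 hyb) (Metric.mem_ball.1 hxb)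
      _ = 1/(j:ℝ) := by rw [← add_div]; field_simp; norm_num
  have hconex : ⟪y - x, wx⟫ ≤ (j:ℝ) * ‖(y - x) - ⟪y - x, wx⟫ • wx‖ := by
    by_contra hcon
    push_neg at hcon
    exact hwx3 y (Metric.mem_ball.2 hdist) hcon hyA
  have hconey : ⟪x - y, wy⟫ ≤ (j:ℝ) * ‖(x - y) - ⟪x - y, wy⟫ • wy‖ := by
    by_contra hcon
    push_neg at hcon
    exact hwy3 x (Metric.mem_ball.2 (by rwa [dist_comm] at hdist)) hcon hxA
  have hxy : x - y = -(y - x) := by abel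
  rw [hxy] at hconey
  exact two_sided hjR hν₀ hwx1 hwy1 hwx2 hwy2 hconex hconey

lemma piece_dist {n : ℕ} {A : Set (EuclideanSpace ℝ (Fin n))} {ν₀ : EuclideanSpace ℝ (Fin n)}
    (hν₀ : ‖ν₀‖ = 1) {j : ℕ} (hj : 1 ≤ j) {c x y : EuclideanSpace ℝ (Fin n)}
    (hx : x ∈ piece A ν₀ j c) (hy : y ∈ piece A ν₀ j c) :
    dist ⟪y, ν₀⟫ ⟪x, ν₀⟫ ≤
      (((2 * j : ℕ) : NNReal) : ℝ) * dist (y - ⟪y, ν₀⟫ • ν₀) (x - ⟪x, ν₀⟫ • ν₀) := by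
  have hk := piece_key hν₀ hj hx hy
  rw [Real.dist_eq, dist_eq_norm]
  have e1 : ⟪y, ν₀⟫ - ⟪x, ν₀⟫ = ⟪y - x, ν₀⟫ := (inner_sub_left _ _ _).symm
  have e2 : (y - ⟪y, ν₀⟫ • ν₀) - (x - ⟪x, ν₀⟫ • ν₀) = (y - x) - ⟪y - x, ν₀⟫ • ν₀ := by
    rw [inner_sub_left]; module
  rw [e1, e2]
  have e3 : (((2 * j : ℕ) : NNReal) : ℝ) = 2 * (j : ℝ) := by push_cast; ring
  rw [e3]
  exact hk

lemma piece_graph {n : ℕ} (A : Set (EuclideanSpace ℝ (Fin n))) (ν₀ : EuclideanSpace ℝ (Fin n))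
    (hν₀ : ‖ν₀‖ = 1) (j : ℕ) (hj : 1 ≤ j) (c : EuclideanSpace ℝ (Fin n)) :
    ∃ g : EuclideanSpace ℝ (Fin n) → ℝ, LipschitzWith ((2 * j : ℕ) : NNReal) g ∧
      ∀ x ∈ piece A ν₀ j c, ⟪x, ν₀⟫ = g (x - ⟪x, ν₀⟫ • ν₀) := by
  classical
  set S := (fun z : EuclideanSpace ℝ (Fin n) => z - ⟪z, ν₀⟫ • ν₀) '' piece A ν₀ j c with hS
  set f : EuclideanSpace ℝ (Fin n) → ℝ :=
    fun w => if h : w ∈ S then ⟪h.choose, ν₀⟫ else 0 with hf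
  have hfeq : ∀ w (h : w ∈ S), f w = ⟪h.choose, ν₀⟫ := fun w h => dif_pos h
  have hchoose : ∀ w (h : w ∈ S),
      h.choose ∈ piece A ν₀ j c ∧ h.choose - ⟪h.choose, ν₀⟫ • ν₀ = w := fun w h => h.choose_spec
  have hfl : LipschitzOnWith ((2 * j : ℕ) : NNReal) f S := by
    rw [lipschitzOnWith_iff_dist_le_mul]
    intro w1 h1 w2 h2
    rw [hfeq w1 h1, hfeq w2 h2]
    have c1 := hchoose w1 h1
    have c2 := hchoose w2 h2
    have := piece_dist hν₀ hj c2.1 c1.1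
    rwa [c1.2, c2.2] at this
  obtain ⟨g, hg, hgeq⟩ := hfl.extend_real
  refine ⟨g, hg, fun x hx => ?_⟩
  have hw : x - ⟪x, ν₀⟫ • ν₀ ∈ S := ⟨x, hx, rfl⟩
  have cc := hchoose _ hw
  have hz := piece_dist hν₀ hj hx cc.1
  rw [cc.2] at hz
  simp only [dist_self, mul_zero] at hz
  have heq : ⟪hw.choose, ν₀⟫ = ⟪x, ν₀⟫ := by
    have := dist_le_zero.1 hz
    exact this
  rw [← hgeq hw, hfeq _ hw, heq]

theorem stmt_10 {n : ℕ} (hn : 0 < n) (A : Set (EuclideanSpace ℝ (Fin n)))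
    (hcone : ∀ x ∈ A, ∃ δ > (0 : ℝ), ∃ α > (0 : ℝ),
      ∃ ν : EuclideanSpace ℝ (Fin n), ‖ν‖ = 1 ∧
        ∀ z ∈ Metric.ball x δ,
          α * ‖(z - x) - ⟪z - x, ν⟫ • ν‖ < ⟪z - x, ν⟫ → z ∉ A) :
    ∃ (ν : ℕ → EuclideanSpace ℝ (Fin n)) (L : ℕ → NNReal)
      (φ : ℕ → EuclideanSpace ℝ (Fin n) → ℝ) (N : Set (EuclideanSpace ℝ (Fin n))),
      μH[(n : ℝ) - 1] N = 0 ∧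
      (∀ k, ‖ν k‖ = 1 ∧ LipschitzWith (L k) (φ k)) ∧
      A ⊆ N ∪ ⋃ k, {z | ⟪z, ν k⟫ = φ k (z - ⟪z, ν k⟫ • ν k)} := by
  classical
  haveI : Nonempty (Metric.sphere (0 : EuclideanSpace ℝ (Fin n)) 1) := by
    refine ⟨⟨EuclideanSpace.single ⟨0, hn⟩ (1:ℝ), ?_⟩⟩
    rw [mem_sphere_zero_iff_norm, EuclideanSpace.norm_single]
    simp
  obtain ⟨d, hd⟩ := TopologicalSpace.exists_dense_seq (Metric.sphere (0 : EuclideanSpace ℝ (Fin n)) 1)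
  obtain ⟨q, hq⟩ := TopologicalSpace.exists_dense_seq (EuclideanSpace ℝ (Fin n))
  let enc : ℕ ≃ ℕ × ℕ × ℕ := (Denumerable.eqv (ℕ × ℕ × ℕ)).symm
  have hdunit : ∀ i, ‖(d i : EuclideanSpace ℝ (Fin n))‖ = 1 :=
    fun i => mem_sphere_zero_iff_norm.1 (d i).2
  have hgraph : ∀ k : ℕ, ∃ g : EuclideanSpace ℝ (Fin n) → ℝ,
      LipschitzWith ((2 * ((enc k).2.1 + 1) : ℕ) : NNReal) g ∧
      ∀ x ∈ piece A (d (enc k).1 : EuclideanSpace ℝ (Fin n)) ((enc k).2.1 + 1) (q (enc k).2.2),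
        ⟪x, (d (enc k).1 : EuclideanSpace ℝ (Fin n))⟫ =
          g (x - ⟪x, (d (enc k).1 : EuclideanSpace ℝ (Fin n))⟫ • (d (enc k).1 : EuclideanSpace ℝ (Fin n))) :=
    fun k => piece_graph A _ (hdunit _) _ (Nat.succ_le_succ (Nat.zero_le _)) _
  choose φ hφL hφg using hgraph
  refine ⟨fun k => (d (enc k).1 : EuclideanSpace ℝ (Fin n)),
    fun k => ((2 * ((enc k).2.1 + 1) : ℕ) : NNReal), φ, ∅, MeasureTheory.measure_empty,
    fun k => ⟨hdunit _, hφL k⟩, ?_⟩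
  intro x hx
  obtain ⟨δ, hδ, α, hα, w, hw1, hw2⟩ := hcone x hx
  obtain ⟨n₀, hn₀⟩ := exists_nat_gt (max α (1 / δ))
  have hαn : α < (n₀:ℝ) := lt_of_le_of_lt (le_max_left _ _) hn₀
  have hδn : 1 / δ < (n₀:ℝ) := lt_of_le_of_lt (le_max_right _ _) hn₀
  set jr : ℝ := (n₀ : ℝ) + 1 with hjr
  have hjpos : (0:ℝ) < jr := by positivity
  have h1j : 1 / jr ≤ δ := by
    rw [div_le_iff₀ hjpos]
    have h' : 1 < (n₀:ℝ) * δ := by rwa [div_lt_iff₀ hδ] at hδn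
    nlinarith
  have hwmem : w ∈ Metric.sphere (0 : EuclideanSpace ℝ (Fin n)) 1 := by
    rwa [mem_sphere_zero_iff_norm]
  obtain ⟨i, hi⟩ := Metric.denseRange_iff.1 hd ⟨w, hwmem⟩ (1 / (12 * jr)) (by positivity)
  obtain ⟨m, hm⟩ := Metric.denseRange_iff.1 hq x (1 / (2 * jr)) (by positivity)
  have hmem : x ∈ piece A (d (enc (enc.symm (i, n₀, m))).1 : EuclideanSpace ℝ (Fin n))
      ((enc (enc.symm (i, n₀, m))).2.1 + 1) (q (enc (enc.symm (i, n₀, m))).2.2) := by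
    simp only [Equiv.apply_symm_apply]
    have hcast : ((n₀ + 1 : ℕ) : ℝ) = jr := by push_cast [hjr]; ring
    refine ⟨hx, ?_, w, hw1, ?_, ?_⟩
    · rw [Metric.mem_ball, hcast]
      exact hm
    · rw [hcast]
      have : dist (⟨w, hwmem⟩ : Metric.sphere (0 : EuclideanSpace ℝ (Fin n)) 1) (d i) < 1 / (12 * jr) := hi
      rw [Subtype.dist_eq, dist_eq_norm] at this
      exact le_of_lt this
    · intro z hz hlt
      rw [hcast] at hz hlt
      have hzδ : z ∈ Metric.ball x δ :=
        Metric.mem_ball.2 (lt_of_lt_of_le (Metric.mem_ball.1 hz) h1j)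
      refine hw2 z hzδ ?_
      calc α * ‖(z - x) - ⟪z - x, w⟫ • w‖ ≤ jr * ‖(z - x) - ⟪z - x, w⟫ • w‖ := by
            apply mul_le_mul_of_nonneg_right (by linarith) (norm_nonneg _)
        _ < ⟪z - x, w⟫ := hlt
  refine Set.mem_union_right _ (Set.mem_iUnion.2 ⟨enc.symm (i, n₀, m), ?_⟩)
  exact hφg _ x hmem
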